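/- Let f ∈ K[X] be a polynomial of degree d ≥ 2 and let ζ ∈ K be a periodic point of f with least period ℓ such that |(f⁽ℓ⁾)′(ζ)| > 1. Then for every ε > 0 there exists a periodic point ξ of f with ξ ≠ ζ and |ξ − ζ| < ε. -/

import Mathlib

open Polynomial

/-- The `n`-th compositional iterate of a polynomial, with `f⁽⁰⁾ = X`. -/
noncomputable def polyIter {K : Type*} [CommSemiring K] (f : K[X]) : ℕ → K[X]
  | 0 => X
  | n + 1 => f.comp (polyIter f n)

lemma polyIter_eval {K : Type*} [CommSemiring K] (f : K[X]) (n : ℕ) (x : K) :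
    (polyIter f n).eval x = (fun y => f.eval y)^[n] x := by
  induction n with
  | zero => simp [polyIter]
  | succ n ih => rw [polyIter, eval_comp, ih, Function.iterate_succ_apply']

lemma norm_add_eq_right {K : Type*} [NormedField K] [IsUltrametricDist K] {x y : K}
    (h : ‖x‖ < ‖y‖) : ‖x + y‖ = ‖y‖ := by
  refine le_antisymm ((IsUltrametricDist.norm_add_le_max x y).trans (max_le h.le le_rfl)) ?_
  have h2 : ‖y‖ ≤ max ‖x + y‖ ‖x‖ := by
    simpa using IsUltrametricDist.norm_add_le_max (x + y) (-x)
  rcases max_cases ‖x + y‖ ‖x‖ with ⟨he, _⟩ | ⟨he, hlt⟩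
  · rwa [he] at h2
  · rw [he] at h2; exact absurd (lt_of_le_of_lt h2 h) (lt_irrefl _)

lemma norm_multiset_prod' {K : Type*} [NormedField K] (s : Multiset K) :
    ‖s.prod‖ = (s.map (fun r => ‖r‖)).prod := by
  induction s using Multiset.induction_on with
  | empty => simp
  | cons a t ih => simp [norm_mul, ih]

lemma pow_card_le_prod_norm {K : Type*} [NormedField K] (u : Multiset K) {ρ : ℝ}
    (hρ : 0 ≤ ρ) (h : ∀ r ∈ u, ρ ≤ ‖r‖) :
    ρ ^ (Multiset.card u) ≤ (u.map (fun r => ‖r‖)).prod := by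
  induction u using Multiset.induction_on with
  | empty => simp
  | cons a t ih =>
    simp only [Multiset.card_cons, Multiset.map_cons, Multiset.prod_cons, pow_succ']
    have ht : ∀ r ∈ t, ρ ≤ ‖r‖ := fun r hr => h r (Multiset.mem_cons_of_mem hr)
    exact mul_le_mul (h a (Multiset.mem_cons_self a t)) (ih ht) (pow_nonneg hρ _) (norm_nonneg a)

lemma coeff_zero_norm {K : Type*} [NormedField K] (P : K[X])
    (hcard : Multiset.card P.roots = P.natDegree) :
    ‖P.coeff 0‖ = ‖P.leadingCoeff‖ * (P.roots.map (fun r => ‖r‖)).prod := by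
  conv_lhs => rw [coeff_zero_eq_eval_zero, ← C_leadingCoeff_mul_prod_multiset_X_sub_C hcard]
  rw [eval_mul, eval_C, norm_mul, eval_multiset_prod, Multiset.map_map]
  congr 1
  rw [norm_multiset_prod', Multiset.map_map]
  congr 1
  refine Multiset.map_congr rfl (fun r _ => ?_)
  show ‖eval 0 (X - C r)‖ = ‖r‖
  simp

lemma coeff_norm_mul_pow_le {K : Type*} [NormedField K] [IsUltrametricDist K] (P : K[X])
    (hcard : Multiset.card P.roots = P.natDegree) {k : ℕ} (hk : k ≤ P.natDegree)
    {ρ : ℝ} (hρ : 0 ≤ ρ) (hmin : ∀ r ∈ P.roots, ρ ≤ ‖r‖) :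
    ‖P.coeff k‖ * ρ ^ k ≤ ‖P.coeff 0‖ := by
  rw [coeff_zero_norm P hcard, Polynomial.coeff_eq_esymm_roots_of_card hcard hk]
  rw [norm_mul, norm_mul, norm_pow, norm_neg, norm_one, one_pow, mul_one, mul_assoc]
  refine mul_le_mul_of_nonneg_left ?_ (norm_nonneg _)
  obtain ⟨t, htmem, hts⟩ := IsUltrametricDist.exists_norm_multiset_sum_le
    (P.roots.powersetCard (P.natDegree - k)) (f := Multiset.prod)
  rw [Multiset.esymm]
  by_cases h0 : P.roots.powersetCard (P.natDegree - k) = 0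
  · rw [h0]
    simp only [Multiset.map_zero, Multiset.sum_zero, norm_zero, zero_mul]
    refine Multiset.prod_nonneg ?_
    intro x hx
    obtain ⟨r, _, rfl⟩ := Multiset.mem_map.mp hx
    exact norm_nonneg r
  · obtain ⟨hle, hcardt⟩ := Multiset.mem_powersetCard.mp (htmem h0)
    obtain ⟨u, hu⟩ := Multiset.le_iff_exists_add.mp hle
    have hcardu : Multiset.card u = k := by
      have := congrArg Multiset.card hu
      rw [Multiset.card_add, hcardt, hcard] at this
      omega
    calc ‖((P.roots.powersetCard (P.natDegree - k)).map Multiset.prod).sum‖ * ρ ^ k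
        ≤ ‖t.prod‖ * ρ ^ k := by
          exact mul_le_mul_of_nonneg_right hts (pow_nonneg hρ k)
      _ ≤ (t.map (fun r => ‖r‖)).prod * (u.map (fun r => ‖r‖)).prod := by
          rw [norm_multiset_prod']
          refine mul_le_mul_of_nonneg_left ?_ ?_
          · rw [← hcardu]
            refine pow_card_le_prod_norm u hρ ?_
            intro r hr
            exact hmin r (by rw [hu]; exact Multiset.mem_add.mpr (Or.inr hr))
          · refine Multiset.prod_nonneg ?_
            intro x hx
            obtain ⟨r, _, rfl⟩ := Multiset.mem_map.mp hx
            exact norm_nonneg r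
      _ = (P.roots.map (fun r => ‖r‖)).prod := by
          rw [hu, Multiset.map_add, Multiset.prod_add]

lemma polyIter_natDegree {K : Type*} [Field K] (f : K[X]) (n : ℕ) :
    (polyIter f n).natDegree = f.natDegree ^ n := by
  induction n with
  | zero => simp [polyIter]
  | succ n ih => rw [polyIter, natDegree_comp, ih]; ring

/-- if `ζ` is a periodic point of least period `ℓ` with `‖(f⁽ℓ⁾)'(ζ)‖ > 1`,
then there are periodic points `ξ ≠ ζ` arbitrarily close to `ζ`. -/
theorem stmt7 {K : Type*} [NormedField K] [IsUltrametricDist K] [CompleteSpace K]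
    [IsAlgClosed K] [CharZero K]
    (p : ℕ) (hp : p.Prime) (hpK : ‖(p : K)‖ = (p : ℝ)⁻¹)
    (f : K[X]) (d : ℕ) (hd : 2 ≤ d) (hdeg : f.natDegree = d)
    (ζ : K) (hζ : ζ ∈ Function.periodicPts (fun x => f.eval x))
    (ℓ : ℕ) (hℓ : ℓ = Function.minimalPeriod (fun x => f.eval x) ζ)
    (hmult : 1 < ‖(polyIter f ℓ).derivative.eval ζ‖) :
    ∀ ε > (0 : ℝ), ∃ ξ : K, ξ ∈ Function.periodicPts (fun x => f.eval x) ∧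
      ξ ≠ ζ ∧ ‖ξ - ζ‖ < ε := by
  intro ε hε
  classical
  have hℓpos : 0 < ℓ := hℓ ▸ Function.minimalPeriod_pos_of_mem_periodicPts hζ
  set g : K[X] := polyIter f ℓ with hg
  have hgζ : g.eval ζ = ζ := by
    rw [polyIter_eval, hℓ]; exact Function.iterate_minimalPeriod
  set T : K[X] := g.comp (X + C ζ) - C ζ with hT
  have hTdeg : T.natDegree = d ^ ℓ := by
    rw [hT, natDegree_sub_C, natDegree_comp, natDegree_X_add_C, mul_one,
      polyIter_natDegree, hdeg]
  have h2T : 2 ≤ T.natDegree := by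
    rw [hTdeg]; exact le_trans hd (Nat.le_self_pow hℓpos.ne' d)
  have hT0 : T ≠ 0 := fun h => by simp [h] at h2T
  -- T evaluates translated dynamics
  have hTeval : ∀ t : K, T.eval t = g.eval (ζ + t) - ζ := by
    intro t
    rw [hT]
    simp [eval_comp, add_comm]
  have hTzero : T.coeff 0 = 0 := by
    rw [coeff_zero_eq_eval_zero, hTeval, add_zero, hgζ, sub_self]
  have hTex : ∃ j, 2 ≤ j ∧ T.coeff j ≠ 0 :=
    ⟨T.natDegree, h2T, by rw [← leadingCoeff]; exact leadingCoeff_ne_zero.mpr hT0⟩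
  set j₀ := Nat.find hTex with hj₀def
  obtain ⟨hj₀2, hj₀ne⟩ := Nat.find_spec hTex
  obtain ⟨m, hm⟩ : ∃ m, j₀ = m + 2 := ⟨j₀ - 2, by omega⟩
  have hsmall : ∀ j, 2 ≤ j → j < j₀ → T.coeff j = 0 := by
    intro j h2j hj
    by_contra hne
    exact Nat.find_min hTex hj ⟨h2j, hne⟩
  set lam : K := T.coeff 1 with hlamdef
  have hlam1 : 1 < ‖lam‖ := by
    have hder : T.derivative = g.derivative.comp (X + C ζ) := by
      rw [hT, derivative_sub, derivative_C, sub_zero, derivative_comp]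
      simp
    have h1 : lam = T.derivative.eval 0 := by
      rw [← coeff_zero_eq_eval_zero, coeff_derivative]
      simp
      exact hlamdef
    have h2 : T.derivative.eval 0 = g.derivative.eval ζ := by
      rw [hder, eval_comp]; simp
    rw [hlamdef] at h1 ⊢
    rw [h1, h2]
    exact hmult
  have hlam0 : lam ≠ 0 := by
    intro h; rw [h, norm_zero] at hlam1; linarith
  -- split T
  have hdvd : X ^ j₀ ∣ T - C lam * X := by
    rw [X_pow_dvd_iff]
    intro i hi
    rcases Nat.lt_or_ge i 2 with h | h
    · interval_cases i
      · simp [hTzero]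
      · simp [hlamdef]
    · rw [coeff_sub, hsmall i h hi, coeff_C_mul, coeff_X, if_neg (by omega), mul_zero, sub_zero]
  obtain ⟨U, hU'⟩ := hdvd
  have hU : T = C lam * X + X ^ j₀ * U := by
    rw [← hU']; ring
  set a : K := U.coeff 0 with hadef
  have haT : T.coeff j₀ = a := by
    have h1 : (X ^ j₀ * U).coeff j₀ = U.coeff 0 := by
      simpa using coeff_X_pow_mul U j₀ 0
    rw [hU, coeff_add, coeff_C_mul, coeff_X, if_neg (by omega), mul_zero, zero_add, h1]
  have ha0 : a ≠ 0 := haT ▸ hj₀ne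
  have haA : 0 < ‖a‖ := norm_pos_iff.mpr ha0
  -- key invariant
  have key : ∀ n : ℕ, ∃ R : K[X], polyIter T (n + 1) = C (lam ^ (n + 1)) * X + X ^ j₀ * R ∧
      ‖R.coeff 0‖ = ‖a‖ * ‖lam‖ ^ (j₀ * n) := by
    intro n
    induction n with
    | zero =>
      refine ⟨U, ?_, by simp [hadef]⟩
      show T.comp (polyIter T 0) = _
      rw [show polyIter T 0 = (X : K[X]) from rfl, comp_X, pow_one]
      exact hU
    | succ n ih =>
      obtain ⟨R, hR, hRc⟩ := ih
      set S : K[X] := polyIter T (n + 1) with hSdef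
      set V : K[X] := C (lam ^ (n + 1)) + X ^ (m + 1) * R with hVdef
      have hSV : S = X * V := by
        rw [hR, hVdef, hm]; ring
      refine ⟨C lam * R + V ^ j₀ * (U.comp S), ?_, ?_⟩
      · show T.comp S = _
        rw [hU, add_comp, mul_comp, C_comp, X_comp, mul_comp, pow_comp, X_comp]
        rw [show S ^ j₀ = X ^ j₀ * V ^ j₀ by rw [hSV, mul_pow]]
        rw [hR]
        rw [show lam ^ (n + 1 + 1) = lam * lam ^ (n + 1) by ring, C_mul]
        ring
      · have hV0 : V.eval 0 = lam ^ (n + 1) := by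
          rw [hVdef]; simp
        have hS0 : S.eval 0 = 0 := by rw [hSV]; simp
        have hUS0 : (U.comp S).eval 0 = a := by
          rw [eval_comp, hS0, hadef, coeff_zero_eq_eval_zero]
        rw [coeff_zero_eq_eval_zero, eval_add, eval_mul, eval_mul, eval_pow, eval_C, hV0, hUS0,
          ← coeff_zero_eq_eval_zero]
        have hx : ‖lam * R.coeff 0‖ < ‖(lam ^ (n + 1)) ^ j₀ * a‖ := by
          rw [norm_mul, norm_mul, norm_pow, norm_pow, hRc]
          rw [show ‖lam‖ * (‖a‖ * ‖lam‖ ^ (j₀ * n)) = ‖a‖ * ‖lam‖ ^ (j₀ * n + 1) by ring]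
          rw [show (‖lam‖ ^ (n + 1)) ^ j₀ * ‖a‖ = ‖a‖ * ‖lam‖ ^ ((n + 1) * j₀) by
            rw [← pow_mul]; ring]
          refine mul_lt_mul_of_pos_left ?_ haA
          exact pow_lt_pow_right₀ hlam1 (by rw [show (n + 1) * j₀ = j₀ * n + j₀ from by ring]; omega)
        rw [norm_add_eq_right hx, norm_mul, norm_pow, norm_pow, ← pow_mul,
          show (n + 1) * j₀ = j₀ * (n + 1) from by ring, mul_comm]
  -- choose N
  set L : ℝ := ‖lam‖ with hLdef
  have hL1 : 1 < L := hlam1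
  have hL0 : 0 < L := lt_trans one_pos hL1
  have hLm1 : 1 < L ^ (m + 1) := one_lt_pow₀ hL1 (by omega)
  have hq1 : (L ^ (m + 1))⁻¹ < 1 := inv_lt_one_of_one_lt₀ hLm1
  obtain ⟨N, hN⟩ := exists_pow_lt_of_lt_one
    (x := ‖a‖ * ε ^ (m + 1) / L) (div_pos (mul_pos haA (pow_pos hε _)) hL0) hq1
  obtain ⟨R, hR, hRc⟩ := key N
  set P : K[X] := polyIter T (N + 1) with hPdef
  have hXpow : ∀ i < j₀, (X ^ j₀ * R).coeff i = 0 :=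
    fun i hi => X_pow_dvd_iff.mp (dvd_mul_right _ _) i hi
  set G : K[X] := P - X with hGdef
  have hG0 : G.coeff 0 = 0 := by
    rw [hGdef, coeff_sub, hR, coeff_add, coeff_C_mul, coeff_X_zero, mul_zero,
      hXpow 0 (by omega)]
    ring
  set H : K[X] := G.divX with hHdef
  have hH0 : H.coeff 0 = lam ^ (N + 1) - 1 := by
    rw [hHdef, coeff_divX, hGdef, coeff_sub, coeff_X_one, hR, coeff_add, coeff_C_mul,
      coeff_X_one, mul_one, hXpow 1 (by omega), add_zero]
  have hHm : H.coeff (m + 1) = R.coeff 0 := by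
    have h1 : (X ^ j₀ * R).coeff (m + 1 + 1) = R.coeff 0 := by
      simpa [hm] using coeff_X_pow_mul R j₀ 0
    rw [hHdef, coeff_divX, hGdef, coeff_sub, hR, coeff_add, coeff_C_mul, h1]
    rw [coeff_X, if_neg (show ¬ (1 = m + 1 + 1) by omega)]
    ring
  have hlampow : ‖lam ^ (N + 1) - 1‖ = L ^ (N + 1) := by
    rw [show lam ^ (N + 1) - 1 = -1 + lam ^ (N + 1) by ring]
    rw [norm_add_eq_right (by
      rw [norm_neg, norm_one, norm_pow]
      exact one_lt_pow₀ hlam1 (by omega))]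
    rw [norm_pow]
  have hH0ne : H.coeff 0 ≠ 0 := by
    rw [hH0]
    intro h
    rw [h, norm_zero] at hlampow
    nlinarith [pow_pos hL0 (N + 1)]
  have hHne : H ≠ 0 := fun h => hH0ne (by rw [h, coeff_zero])
  have hRc0 : R.coeff 0 ≠ 0 := by
    intro h
    rw [h, norm_zero] at hRc
    exact absurd hRc.symm (ne_of_gt (mul_pos haA (pow_pos hL0 _)))
  have hHdeg : m + 1 ≤ H.natDegree := le_natDegree_of_ne_zero (hHm ▸ hRc0)
  have hcard : Multiset.card H.roots = H.natDegree :=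
    splits_iff_card_roots.mp (IsAlgClosed.splits H)
  have hrne : H.roots ≠ 0 := by
    intro h
    rw [h] at hcard
    simp only [Multiset.card_zero] at hcard
    omega
  obtain ⟨ξ, hξm, hξmin⟩ := H.roots.toFinset.exists_min_image (fun r => ‖r‖)
    (Multiset.toFinset_nonempty.mpr hrne)
  have hξroot : ξ ∈ H.roots := Multiset.mem_toFinset.mp hξm
  have hminr : ∀ r ∈ H.roots, ‖ξ‖ ≤ ‖r‖ := fun r hr => hξmin r (Multiset.mem_toFinset.mpr hr)
  have hHx : H.eval ξ = 0 := (mem_roots hHne).mp hξroot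
  have hξ0 : ξ ≠ 0 := by
    intro h
    rw [h] at hHx
    exact hH0ne (by rwa [coeff_zero_eq_eval_zero])
  have hcineq := coeff_norm_mul_pow_le H hcard hHdeg (norm_nonneg ξ) hminr
  rw [hHm, hRc, hH0, hlampow] at hcineq
  have hchoice : L ^ (N + 1) < (‖a‖ * L ^ (j₀ * N)) * ε ^ (m + 1) := by
    have h1 : ((L ^ (m + 1))⁻¹) ^ N * L < ‖a‖ * ε ^ (m + 1) := by
      rw [← lt_div_iff₀ hL0]
      exact hN
    have hL0' : L ≠ 0 := ne_of_gt hL0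
    have h2 : L ^ (N + 1) = (((L ^ (m + 1))⁻¹) ^ N * L) * L ^ (j₀ * N) := by
      rw [inv_pow, ← pow_mul, hm, show (m + 2) * N = (m + 1) * N + N from by ring, pow_add]
      field_simp
      ring
    calc L ^ (N + 1) = (((L ^ (m + 1))⁻¹) ^ N * L) * L ^ (j₀ * N) := h2
      _ < (‖a‖ * ε ^ (m + 1)) * L ^ (j₀ * N) :=
          mul_lt_mul_of_pos_right h1 (pow_pos hL0 _)
      _ = (‖a‖ * L ^ (j₀ * N)) * ε ^ (m + 1) := by ring
  have hxe : ‖ξ‖ ^ (m + 1) < ε ^ (m + 1) :=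
    lt_of_mul_lt_mul_left (lt_of_le_of_lt hcineq hchoice)
      (le_of_lt (mul_pos haA (pow_pos hL0 _)))
  have hxeps : ‖ξ‖ < ε := lt_of_pow_lt_pow_left₀ (m + 1) (le_of_lt hε) hxe
  -- ξ gives a periodic point ζ + ξ
  have hPx : P.eval ξ = ξ := by
    have hsplit : X * H + C (G.coeff 0) = G := X_mul_divX_add G
    have hGx0 : G.eval ξ = 0 := by
      rw [← hsplit, hG0, map_zero, add_zero, eval_mul, eval_X, hHx, mul_zero]
    rw [hGdef, eval_sub, eval_X] at hGx0
    exact sub_eq_zero.mp hGx0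
  have hgev : ∀ y : K, g.eval y = (fun x => f.eval x)^[ℓ] y := by
    intro y
    rw [hg]
    exact polyIter_eval f ℓ y
  have hTit : ∀ (k : ℕ) (t : K),
      (fun y => T.eval y)^[k] t = (fun x => f.eval x)^[k * ℓ] (ζ + t) - ζ := by
    intro k
    induction k with
    | zero => intro t; simp
    | succ k ih =>
      intro t
      rw [Function.iterate_succ_apply', ih, hTeval,
        show ζ + ((fun x => f.eval x)^[k * ℓ] (ζ + t) - ζ)
          = (fun x => f.eval x)^[k * ℓ] (ζ + t) by ring,
        hgev, ← Function.iterate_add_apply,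
        show ℓ + k * ℓ = (k + 1) * ℓ from by ring]
  have hfix : (fun x => f.eval x)^[(N + 1) * ℓ] (ζ + ξ) = ζ + ξ := by
    have h6 : (fun y => T.eval y)^[N + 1] ξ = ξ := by
      rw [← polyIter_eval]
      exact hPx
    have h7 := hTit (N + 1) ξ
    rw [h6] at h7
    have := congrArg (· + ζ) h7
    simp only [sub_add_cancel] at this
    rw [← this]
    ring
  refine ⟨ζ + ξ, ?_, ?_, ?_⟩
  · rw [Function.mem_periodicPts]
    exact ⟨(N + 1) * ℓ, by positivity, hfix⟩
  · intro h
    exact hξ0 (by simpa using h)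
  · rw [add_sub_cancel_left]
    exact hxeps
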